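/- Let s > 0 and q ∈ ℝ. A real number u is a global minimizer of the function u ↦ q·u + u²/2 + s·|u|₀ (where |u|₀ = 0 if u = 0 and 1 otherwise) if and only if: u = -q when q² > 2s; u ∈ {0, -q} when q² = 2s; and u = 0 when q² < 2s. -/
import Mathlib


/-- The "L⁰ norm" of a real number: 0 if `u = 0`, else 1. -/
noncomputable def nrm0 (u : ℝ) : ℝ := if u = 0 then 0 else 1

/-- Characterization of global minimizers of `u ↦ q·u + u²/2 + s·|u|₀`. -/
theorem hard_threshold_characterization (s q u : ℝ) (hs : 0 < s) :
    (∀ v : ℝ, q * u + u ^ 2 / 2 + s * nrm0 u ≤ q * v + v ^ 2 / 2 + s * nrm0 v) ↔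
      ((q ^ 2 > 2 * s ∧ u = -q) ∨
       (q ^ 2 = 2 * s ∧ (u = 0 ∨ u = -q)) ∨
       (q ^ 2 < 2 * s ∧ u = 0)) := by
  unfold nrm0
  constructor
  · intro h
    rcases lt_trichotomy (q ^ 2) (2 * s) with hq | hq | hq
    · right; right; refine ⟨hq, ?_⟩
      by_contra hu
      have h0 := h 0
      simp [hu] at h0
      nlinarith [sq_nonneg (u + q)]
    · right; left; refine ⟨hq, ?_⟩
      by_cases hu : u = 0
      · exact Or.inl hu
      · right
        have h0 := h 0
        simp [hu] at h0
        nlinarith [sq_nonneg (u + q)]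
    · left; refine ⟨hq, ?_⟩
      have hq0 : q ≠ 0 := by intro h0; rw [h0] at hq; nlinarith
      have hmq := h (-q)
      have hu : u ≠ 0 := by
        intro h0
        rw [h0] at hmq
        simp [neg_eq_zero, hq0] at hmq
        nlinarith
      simp [hu, neg_eq_zero, hq0] at hmq
      nlinarith [sq_nonneg (u + q)]
  · intro h v
    rcases h with ⟨hq, hu⟩ | ⟨hq, hu | hu⟩ | ⟨hq, hu⟩
    · have hq0 : q ≠ 0 := by intro h0; rw [h0] at hq; nlinarith
      subst hu
      by_cases hv : v = 0 <;> simp [hv, neg_eq_zero, hq0] <;>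
        nlinarith [sq_nonneg (v + q)]
    · subst hu
      by_cases hv : v = 0 <;> simp [hv] <;> nlinarith [sq_nonneg (v + q)]
    · have hq0 : q ≠ 0 := by intro h0; rw [h0] at hq; nlinarith
      subst hu
      by_cases hv : v = 0 <;> simp [hv, neg_eq_zero, hq0] <;>
        nlinarith [sq_nonneg (v + q)]
    · subst hu
      by_cases hv : v = 0 <;> simp [hv] <;> nlinarith [sq_nonneg (v + q)]
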